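/- Let F be a saturated fusion system on a finite abelian 2-group S. Then dim_{F₂} B(F)^× = s + 1, where s is the number of F-conjugacy classes of maximal subgroups of S. Moreover {−1} ∪ {tr^F_S(v_{M_1}), …, tr^F_S(v_{M_s})} is an F₂-basis of B(F)^×, where M_1, …, M_s are representatives of the F-conjugacy classes of maximal subgroups of S. -/

import Mathlib

namespace BurnsideFusion

/-! ### The Burnside ring, realized via marks inside the ghost ring -/

/-- The vector of marks of the transitive `G`-set `G/K`:
its value at `H ≤ G` is the number of `H`-fixed points of `G/K`. -/
noncomputable def markVector (G : Type*) [Group G] (K : Subgroup G) : Subgroup G → ℤ :=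
  fun H => (Nat.card {x : G ⧸ K // ∀ h : G, h ∈ H → h • x = x} : ℤ)

/-- The Burnside ring of `G`, realized (faithfully, via the injective mark homomorphism)
as the subring of the ghost ring `∏_{H ≤ G} ℤ` generated by the marks of the
transitive `G`-sets `G/K`.  The mark of an element `a` at `H` is just `a H`. -/
noncomputable def burnsideRing (G : Type*) [Group G] : Subring (Subgroup G → ℤ) :=
  Subring.closure (Set.range (markVector G))

/-- The unit group `B(G)^×` of the Burnside ring, as a set:
since every unit of `B(G)` has all marks `±1`, the units are exactly the
elements squaring to `1`. -/
def burnsideUnits (G : Type*) [Group G] : Set (Subgroup G → ℤ) :=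
  {b | b ∈ burnsideRing G ∧ b * b = 1}

/-- Restriction `B(G) → B(S)` for `S ≤ G`, on marks:
`(n_H)_{H ≤ G} ↦ (n_P)_{P ≤ S}`. -/
def resMark {G : Type*} [Group G] (S : Subgroup G) (b : Subgroup G → ℤ) :
    Subgroup ↥S → ℤ :=
  fun P => b (P.map S.subtype)

/-- The action of a (bijective) endomorphism `f` of `G` on the ghost ring, on marks:
`(f · b)_Q = b_{f⁻¹(Q)}`. -/
def autAct {G : Type*} [Group G] (f : G →* G) (b : Subgroup G → ℤ) : Subgroup G → ℤ :=
  fun Q => b (Q.comap f)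

/-- The elements of the Burnside ring fixed by a set `A` of automorphisms of `G`.
(For `A = Aut_F(P)` this is `B(P)^{Out_F(P)}`, since the inner automorphisms
act trivially on `B(P)`.) -/
def fixedBurnside (G : Type*) [Group G] (A : Set (MulAut G)) : Set (Subgroup G → ℤ) :=
  {b | b ∈ burnsideRing G ∧ ∀ α ∈ A, autAct α.toMonoidHom b = b}

/-- The units of the Burnside ring fixed by a set `A` of automorphisms of `G`. -/
def fixedUnits (G : Type*) [Group G] (A : Set (MulAut G)) : Set (Subgroup G → ℤ) :=
  {b | b ∈ burnsideUnits G ∧ ∀ α ∈ A, autAct α.toMonoidHom b = b}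

/-- The relative trace map `tr^Γ_Δ` on the (units of the) Burnside ring:
the product of `α · b` over a set of representatives `α` of the cosets `Γ/Δ`. -/
noncomputable def relTrace {G : Type*} [Group G] (Γ Δ : Subgroup (MulAut G))
    (b : Subgroup G → ℤ) : Subgroup G → ℤ :=
  ∏ᶠ c : ↥Γ ⧸ Δ.subgroupOf Γ, autAct ((Quotient.out c : ↥Γ) : MulAut G).toMonoidHom b

/-! ### Fusion systems -/

/-- The homomorphism `P → Q` induced by conjugation by `s`. -/
def conjMap {S : Type*} [Group S] (s : S) (P Q : Subgroup S)
    (h : ∀ x ∈ P, s * x * s⁻¹ ∈ Q) : ↥P →* ↥Q where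
  toFun x := ⟨s * ↑x * s⁻¹, h x x.2⟩
  map_one' := by ext; simp
  map_mul' x y := by ext; simp

/-- A fusion system `F` on a group `S`: a category whose objects are the subgroups
of `S` and whose morphisms are injective group homomorphisms, containing all the
homomorphisms induced by conjugation in `S`, and such that every morphism factors
as an isomorphism in `F` followed by an inclusion. -/
structure FusionSystem (S : Type*) [Group S] where
  /-- The set of `F`-morphisms `P → Q`. -/
  Hom : ∀ P Q : Subgroup S, Set (↥P →* ↥Q)
  /-- All morphisms are injective. -/
  inj : ∀ {P Q : Subgroup S} {f : ↥P →* ↥Q}, f ∈ Hom P Q → Function.Injective f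
  /-- `Hom_S(P,Q) ⊆ Hom_F(P,Q)`. -/
  conj_mem : ∀ (s : S) (P Q : Subgroup S) (h : ∀ x ∈ P, s * x * s⁻¹ ∈ Q),
    conjMap s P Q h ∈ Hom P Q
  /-- Morphisms compose. -/
  comp_mem : ∀ {P Q R : Subgroup S} {f : ↥P →* ↥Q} {g : ↥Q →* ↥R},
    f ∈ Hom P Q → g ∈ Hom Q R → g.comp f ∈ Hom P R
  /-- Every morphism factors as an isomorphism in `F` onto its image followed by an
  inclusion. -/
  factor_mem : ∀ {P Q : Subgroup S} {f : ↥P →* ↥Q}, f ∈ Hom P Q →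
    ∃ (R : Subgroup S) (_ : R ≤ Q) (e : ↥P ≃* ↥R), e.toMonoidHom ∈ Hom P R ∧
      ∀ x : ↥P, ((e x : ↥R) : S) = ((f x : ↥Q) : S)
  /-- Isomorphisms in `F` are invertible in `F`. -/
  isoinv_mem : ∀ {P Q : Subgroup S} (e : ↥P ≃* ↥Q),
    e.toMonoidHom ∈ Hom P Q → e.symm.toMonoidHom ∈ Hom Q P

namespace FusionSystem

variable {S : Type*} [Group S] (F : FusionSystem S)

/-- Two subgroups of `S` are `F`-conjugate (isomorphic in `F`). -/
def SubConj (P Q : Subgroup S) : Prop :=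
  ∃ f ∈ F.Hom P Q, Function.Surjective ⇑f

/-- Two elements of `S` are `F`-conjugate: some `F`-isomorphism `⟨x⟩ → ⟨y⟩` sends
`x` to `y`. -/
def ElemConj (x y : S) : Prop :=
  ∃ f ∈ F.Hom (Subgroup.zpowers x) (Subgroup.zpowers y),
    f ⟨x, Subgroup.mem_zpowers x⟩ = ⟨y, Subgroup.mem_zpowers y⟩

/-- A subgroup `P ≤ S` is strongly closed in `F` if the `F`-conjugacy class of every
element of `P` is contained in `P`. -/
def StronglyClosed (P : Subgroup S) : Prop :=
  ∀ x ∈ P, ∀ y : S, F.ElemConj x y → y ∈ P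

/-- A subgroup `P` is normal in `F`: every morphism `φ ∈ Hom_F(Q,R)` extends to a
morphism `ψ ∈ Hom_F(QP, RP)` with `ψ|_Q = φ` and `ψ(P) = P`. -/
def NormalIn (P : Subgroup S) : Prop :=
  ∀ (Q R : Subgroup S), ∀ φ ∈ F.Hom Q R,
    ∃ ψ ∈ F.Hom (Q ⊔ P) (R ⊔ P),
      (∀ (x : S) (hx : x ∈ Q),
        ((ψ ⟨x, Subgroup.mem_sup_left hx⟩ : ↥(R ⊔ P)) : S) = ((φ ⟨x, hx⟩ : ↥R) : S)) ∧
      (∀ (x : S) (hx : x ∈ P),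
        ((ψ ⟨x, Subgroup.mem_sup_right hx⟩ : ↥(R ⊔ P)) : S) ∈ P) ∧
      (∀ y ∈ P, ∃ (x : S) (hx : x ∈ P),
        ((ψ ⟨x, Subgroup.mem_sup_right hx⟩ : ↥(R ⊔ P)) : S) = y)

/-- `Aut_F(P)`: the group of `F`-automorphisms of `P`. -/
def AutF (P : Subgroup S) : Subgroup (MulAut ↥P) where
  carrier := {α | α.toMonoidHom ∈ F.Hom P P}
  one_mem' := by
    have h : ∀ x ∈ P, (1 : S) * x * (1 : S)⁻¹ ∈ P := fun x hx => by simpa using hx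
    have h1 := F.conj_mem 1 P P h
    have e : conjMap (1 : S) P P h = (1 : MulAut ↥P).toMonoidHom := by
      ext x; simp [conjMap]
    rwa [e] at h1
  mul_mem' := by
    intro α β hα hβ
    have h := F.comp_mem hβ hα
    have e : α.toMonoidHom.comp β.toMonoidHom = (α * β).toMonoidHom := rfl
    rwa [e] at h
  inv_mem' := by
    intro α hα
    exact F.isoinv_mem α hα

end FusionSystem

/-- The conjugation automorphism of `P` induced by an element of its normalizer. -/
def conjAut {S : Type*} [Group S] (P : Subgroup S) (s : ↥(Subgroup.normalizer (P : Set S))) : MulAut ↥P where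
  toFun x := ⟨(s : S) * ↑x * (s : S)⁻¹, (Subgroup.mem_normalizer_iff.mp s.2 ↑x).mp x.2⟩
  invFun x := ⟨(s : S)⁻¹ * ↑x * (s : S), by
    have h := (Subgroup.mem_normalizer_iff.mp ((Subgroup.normalizer (P : Set S)).inv_mem s.2) (↑x : S)).mp x.2
    simpa using h⟩
  left_inv x := by ext; simp; group
  right_inv x := by ext; simp; group
  map_mul' x y := by ext; simp

/-- The homomorphism `N_S(P) → Aut(P)` given by conjugation. -/
def conjAutHom {S : Type*} [Group S] (P : Subgroup S) : ↥(Subgroup.normalizer (P : Set S)) →* MulAut ↥P where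
  toFun := conjAut P
  map_one' := by ext x; simp [conjAut]
  map_mul' s t := by ext x; simp [conjAut]; group

/-- `Aut_S(P)`: the subgroup of `Aut(P)` of automorphisms induced by conjugation in `S`. -/
def AutS {S : Type*} [Group S] (P : Subgroup S) : Subgroup (MulAut ↥P) :=
  (conjAutHom P).range

end BurnsideFusion

namespace BurnsideFusion

variable {S : Type*} [Group S]

/-- The automorphism of `⊤ ≤ S` induced by an automorphism of `S`. -/
def topRestrict (α : MulAut S) : MulAut ↥(⊤ : Subgroup S) :=
  (Subgroup.topEquiv.trans α).trans Subgroup.topEquiv.symm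

theorem topRestrict_one : topRestrict (1 : MulAut S) = 1 := by
  ext x; simp [topRestrict]

theorem topRestrict_mul (α β : MulAut S) :
    topRestrict (α * β) = topRestrict α * topRestrict β := by
  ext x; simp [topRestrict]

theorem topRestrict_inv (α : MulAut S) :
    topRestrict α⁻¹ = (topRestrict α).symm := by
  ext x; simp [topRestrict, MulAut.inv_def]

/-- `Aut_F(S)`, realized as a subgroup of `Aut(S)`. -/
def FusionSystem.AutFS (F : FusionSystem S) : Subgroup (MulAut S) where
  carrier := {α | (topRestrict α).toMonoidHom ∈ F.Hom ⊤ ⊤}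
  one_mem' := by
    have h := (F.AutF ⊤).one_mem
    have h' : (1 : MulAut ↥(⊤ : Subgroup S)).toMonoidHom ∈ F.Hom ⊤ ⊤ := h
    simpa [Set.mem_setOf_eq, topRestrict_one] using h'
  mul_mem' := by
    intro α β hα hβ
    have h := F.comp_mem (hβ : (topRestrict β).toMonoidHom ∈ F.Hom ⊤ ⊤) hα
    have e : (topRestrict α).toMonoidHom.comp (topRestrict β).toMonoidHom
        = (topRestrict (α * β)).toMonoidHom := by
      rw [topRestrict_mul]; rfl
    rw [e] at h; exact h
  inv_mem' := by
    intro α hα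
    have h := F.isoinv_mem (topRestrict α) hα
    simpa [Set.mem_setOf_eq, topRestrict_inv] using h

end BurnsideFusion

namespace BurnsideFusion

variable {S : Type*} [Group S]

namespace FusionSystem

variable (F : FusionSystem S)

/-- `P` is fully normalized in `F`: its normalizer has maximal order in its
`F`-conjugacy class. -/
def FullyNormalized (P : Subgroup S) : Prop :=
  ∀ Q : Subgroup S, F.SubConj P Q → Nat.card ↥(Subgroup.normalizer (Q : Set S)) ≤ Nat.card ↥(Subgroup.normalizer (P : Set S))

/-- `P` is fully centralized in `F`: its centralizer has maximal order in its
`F`-conjugacy class. -/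
def FullyCentralized (P : Subgroup S) : Prop :=
  ∀ Q : Subgroup S, F.SubConj P Q →
    Nat.card ↥(Subgroup.centralizer (Q : Set S)) ≤ Nat.card ↥(Subgroup.centralizer (P : Set S))

/-- `P` is `F`-centric: every `F`-conjugate `Q` of `P` satisfies `C_S(Q) ≤ Q`. -/
def Centric (P : Subgroup S) : Prop :=
  ∀ Q : Subgroup S, F.SubConj P Q → Subgroup.centralizer (Q : Set S) ≤ Q

/-- `P` is fully `F`-automized: `Aut_S(P)` is a Sylow `p`-subgroup of `Aut_F(P)`. -/
def FullyAutomized (p : ℕ) (P : Subgroup S) : Prop :=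
  AutS P ≤ F.AutF P ∧ IsPGroup p ↥((AutS P).subgroupOf (F.AutF P)) ∧
    ¬ p ∣ ((AutS P).subgroupOf (F.AutF P)).index

end FusionSystem

/-- For an `F`-isomorphism `φ : P → Q`, the subset
`N_φ = { g ∈ N_S(P) | φ ∘ c_g ∘ φ⁻¹ ∈ Aut_S(Q) }` of `S`. -/
def NphiSet (P Q : Subgroup S) (φ : ↥P ≃* ↥Q) : Set S :=
  {g | ∃ hg : g ∈ Subgroup.normalizer (P : Set S), ∃ h : S, ∀ (x : S) (hx : x ∈ P),
    ((φ ⟨g * x * g⁻¹, (Subgroup.mem_normalizer_iff.mp hg x).mp hx⟩ : ↥Q) : S)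
      = h * ((φ ⟨x, hx⟩ : ↥Q) : S) * h⁻¹}

namespace FusionSystem

variable (F : FusionSystem S)

/-- `Q` is receptive in `F`: every `F`-isomorphism `φ : P → Q` extends to a morphism
in `F` defined on `N_φ`. -/
def Receptive (Q : Subgroup S) : Prop :=
  ∀ (P : Subgroup S) (φ : ↥P ≃* ↥Q), φ.toMonoidHom ∈ F.Hom P Q →
    ∃ T : Subgroup S, (T : Set S) = NphiSet P Q φ ∧
      ∃ ψ ∈ F.Hom T ⊤, ∀ (x : S) (hx : x ∈ P) (hx' : x ∈ T),
        ((ψ ⟨x, hx'⟩ : ↥(⊤ : Subgroup S)) : S) = ((φ ⟨x, hx⟩ : ↥Q) : S)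

/-- `F` is saturated: every `F`-conjugacy class of subgroups contains a fully
automized, receptive member. -/
def IsSaturated (p : ℕ) : Prop :=
  ∀ P : Subgroup S, ∃ Q : Subgroup S, F.SubConj P Q ∧ F.FullyAutomized p Q ∧ F.Receptive Q

end FusionSystem

theorem innRange_subgroupOf_normal (F : FusionSystem S) (P : Subgroup S) :
    (((MulAut.conj : ↥P →* MulAut ↥P).range).subgroupOf (F.AutF P)).Normal := by
  have h : ((MulAut.conj : ↥P →* MulAut ↥P).range).Normal := by
    constructor
    intro n hn g
    obtain ⟨x, rfl⟩ := hn
    refine ⟨g x, ?_⟩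
    ext y
    simp [MulAut.conj_apply, MulAut.inv_def, mul_assoc]
  exact h.subgroupOf _

/-- `Out_F(P) = Aut_F(P)/Inn(P)`. -/
def OutF (F : FusionSystem S) (P : Subgroup S) : Type _ :=
  ↥(F.AutF P) ⧸ ((MulAut.conj : ↥P →* MulAut ↥P).range.subgroupOf (F.AutF P))

noncomputable instance (F : FusionSystem S) (P : Subgroup S) : Group (OutF F P) :=
  letI := innRange_subgroupOf_normal F P
  QuotientGroup.Quotient.group _

/-- A strongly `p`-embedded subgroup: a proper subgroup `H < Γ` such that `p` divides
`|H|` and `p` does not divide `|H ∩ gHg⁻¹|` for every `g ∉ H`. -/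
def IsStronglyPEmbedded (p : ℕ) {Γ : Type*} [Group Γ] (H : Subgroup Γ) : Prop :=
  H ≠ ⊤ ∧ p ∣ Nat.card ↥H ∧
    ∀ g : Γ, g ∉ H → ¬ p ∣ Nat.card ↥(H ⊓ H.map (MulAut.conj g).toMonoidHom)

/-- `R` is `F`-essential: `R` is fully normalized, `F`-centric, and `Out_F(R)`
contains a strongly `p`-embedded subgroup. -/
def IsEssential (p : ℕ) (F : FusionSystem S) (R : Subgroup S) : Prop :=
  F.FullyNormalized R ∧ F.Centric R ∧
    ∃ H : Subgroup (OutF F R), IsStronglyPEmbedded p H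

/-- The Burnside ring `B(F)` of a fusion system: the subring of `B(S)` of elements
whose marks agree on `F`-conjugate subgroups. -/
noncomputable def FusionSystem.burnside (F : FusionSystem S) : Subring (Subgroup S → ℤ) where
  carrier := {b | b ∈ burnsideRing S ∧ ∀ P Q : Subgroup S, F.SubConj P Q → b P = b Q}
  zero_mem' := ⟨zero_mem _, fun _ _ _ => rfl⟩
  one_mem' := ⟨one_mem _, fun _ _ _ => rfl⟩
  add_mem' := fun ha hb => ⟨add_mem ha.1 hb.1, fun P Q h => by
    simp only [Pi.add_apply, ha.2 P Q h, hb.2 P Q h]⟩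
  mul_mem' := fun ha hb => ⟨mul_mem ha.1 hb.1, fun P Q h => by
    simp only [Pi.mul_apply, ha.2 P Q h, hb.2 P Q h]⟩
  neg_mem' := fun ha => ⟨neg_mem ha.1, fun P Q h => by
    simp only [Pi.neg_apply, ha.2 P Q h]⟩

/-- The unit group `B(F)^×` of the Burnside ring of a fusion system, as a set. -/
noncomputable def FusionSystem.burnsideUnits (F : FusionSystem S) : Set (Subgroup S → ℤ) :=
  {b | b ∈ F.burnside ∧ b * b = 1}

/-- `F`-conjugacy as an equivalence relation on the subgroups of `S`. -/
def fconjSetoid (F : FusionSystem S) : Setoid (Subgroup S) where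
  r := F.SubConj
  iseqv := by
    constructor
    · intro P
      refine ⟨conjMap 1 P P (fun x hx => by simpa using hx), F.conj_mem _ _ _ _, ?_⟩
      intro y; exact ⟨y, by ext; simp [conjMap]⟩
    · rintro P Q ⟨f, hf, hsurj⟩
      have hbij : Function.Bijective ⇑f := ⟨F.inj hf, hsurj⟩
      have he : (MulEquiv.ofBijective f hbij).toMonoidHom ∈ F.Hom P Q := by
        have : (MulEquiv.ofBijective f hbij).toMonoidHom = f := by ext x; rfl
        rwa [this]
      exact ⟨(MulEquiv.ofBijective f hbij).symm.toMonoidHom, F.isoinv_mem _ he,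
        (MulEquiv.ofBijective f hbij).symm.surjective⟩
    · rintro P Q R ⟨f, hf, hfs⟩ ⟨g, hg, hgs⟩
      exact ⟨g.comp f, F.comp_mem hf hg, hgs.comp hfs⟩

open Classical in
/-- The unit `v_M ∈ B(S)^×` attached to a maximal subgroup `M < S`:
its mark at `P` is `-1` if `P ≤ M` and `+1` otherwise. -/
noncomputable def vUnit (S : Type*) [Group S] (M : Subgroup S) : Subgroup S → ℤ :=
  fun P => if P ≤ M then -1 else 1

end BurnsideFusion

namespace BurnsideFusion

variable {G : Type*} [Group G]

/-- `S` is a Sylow `p`-subgroup of `G`. -/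
def IsSylow (p : ℕ) (S : Subgroup G) : Prop :=
  IsPGroup p ↥S ∧ ¬ p ∣ S.index

/-- `K` is a Sylow `p`-subgroup of `H` (both subgroups of an ambient group `G`). -/
def IsSylowIn (p : ℕ) (H K : Subgroup G) : Prop :=
  K ≤ H ∧ IsPGroup p ↥K ∧ ¬ p ∣ (K.subgroupOf H).index

/-- An element of the ghost ring of `S` has marks which agree on pairs of subgroups
of `S` that are conjugate by an element of `N ≤ G`.  For `N = ⊤` this is stability
for the Frobenius fusion system `F_S(G)`; for `N = N_G(S)` it is stability for
`F_S(N_G(S))`. -/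
def frobStable (S N : Subgroup G) (b : Subgroup ↥S → ℤ) : Prop :=
  ∀ P Q : Subgroup ↥S,
    (∃ g ∈ N, (P.map S.subtype).map (MulAut.conj g).toMonoidHom = Q.map S.subtype) →
    b P = b Q

/-- The Burnside ring `B(F_S(N))` of the fusion system on `S` induced by a subgroup
`N` of `G` containing `S`, as a subset of `B(S)`. -/
noncomputable def frobBurnside (S N : Subgroup G) : Set (Subgroup ↥S → ℤ) :=
  {b | b ∈ burnsideRing ↥S ∧ frobStable S N b}

/-- The unit group `B(F_S(N))^×`, as a set. -/
noncomputable def frobUnits (S N : Subgroup G) : Set (Subgroup ↥S → ℤ) :=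
  {b | b ∈ frobBurnside S N ∧ b * b = 1}

/-- Restriction `B(N) → B(S)` for `S ≤ N ≤ G`, on marks. -/
def resMark₂ (S N : Subgroup G) (b : Subgroup ↥N → ℤ) : Subgroup ↥S → ℤ :=
  fun P => b ((P.map S.subtype).subgroupOf N)

/-- Tensor induction `B(Ten^G_S) : B(S)^× → B(G)^×`, on marks: the mark of
`Ten^G_S b` at `H ≤ G` is the product over the double cosets `HgS` of the marks
`b_{(g⁻¹Hg ∩ S)}`. -/
noncomputable def tenInd (S : Subgroup G) (b : Subgroup ↥S → ℤ) : Subgroup G → ℤ :=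
  fun H => ∏ᶠ c : DoubleCoset.Quotient (H : Set G) (S : Set G),
    b ((H.comap (MulAut.conj (Quotient.out c)).toMonoidHom).subgroupOf S)

/-- `Aut_G(S)`: the automorphisms of `S ≤ G` induced by conjugation by elements
of `G` (as a set). -/
def autGSet (S : Subgroup G) : Set (MulAut ↥S) :=
  {α | ∃ g : G, ∀ x : ↥S, ((α x : ↥S) : G) = g * (x : G) * g⁻¹}

end BurnsideFusion

namespace BurnsideFusion

/-! ### Auxiliary development for Statement 18 -/

section BurnsideAbelian

set_option linter.unusedSectionVars false
open scoped Classical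

variable {S : Type*} [CommGroup S] [Finite S]

theorem conj_eq_self (g x : S) : g * x * g⁻¹ = x := by
  rw [mul_comm g x, mul_assoc, mul_inv_cancel, mul_one]

theorem smul_quot_eq_iff (K : Subgroup S) (h g : S) :
    h • ((g : S ⧸ K)) = (g : S ⧸ K) ↔ h ∈ K := by
  have e : (h * g)⁻¹ * g = h⁻¹ := by
    rw [mul_comm h g, mul_inv_rev, mul_assoc, inv_mul_cancel, mul_one]
  constructor
  · intro hx
    have hx' : ((h * g : S) : S ⧸ K) = (g : S ⧸ K) := hx
    rw [QuotientGroup.eq, e] at hx'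
    exact (Subgroup.inv_mem_iff K).mp hx'
  · intro hk
    show ((h * g : S) : S ⧸ K) = (g : S ⧸ K)
    rw [QuotientGroup.eq, e]
    exact inv_mem hk

theorem markVector_comm (K P : Subgroup S) :
    markVector S K P = if P ≤ K then (K.index : ℤ) else 0 := by
  unfold markVector
  split_ifs with h
  · rw [Subgroup.index_eq_card]
    congr 1
    refine Nat.card_congr (Equiv.subtypeUnivEquiv ?_)
    intro x
    induction x using QuotientGroup.induction_on with
    | H g => exact fun h' hh' => (smul_quot_eq_iff K h' g).mpr (h hh')
  · obtain ⟨h0, hh0, hh0K⟩ := SetLike.not_le_iff_exists.mp h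
    have : IsEmpty {x : S ⧸ K // ∀ h' : S, h' ∈ P → h' • x = x} := by
      refine ⟨fun x => ?_⟩
      obtain ⟨⟨g⟩, hx⟩ := x
      exact hh0K ((smul_quot_eq_iff K h0 g).mp (hx h0 hh0))
    rw [Nat.card_of_isEmpty]
    rfl

theorem markVector_top : markVector S (⊤ : Subgroup S) = 1 := by
  funext P
  rw [markVector_comm, if_pos le_top, Subgroup.index_top, Pi.one_apply, Nat.cast_one]

theorem markVector_mul (K L : Subgroup S) :
    ∃ n : ℕ, markVector S K * markVector S L = (n : ℤ) • markVector S (K ⊓ L) := by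
  have hdvd : (K ⊓ L).relIndex K ∣ L.index := by
    rw [Subgroup.inf_relIndex_left]
    exact Subgroup.relIndex_dvd_index_of_normal L K
  obtain ⟨m, hm⟩ := hdvd
  refine ⟨m, ?_⟩
  funext P
  simp only [Pi.mul_apply, Pi.smul_apply, markVector_comm, smul_eq_mul]
  by_cases h : P ≤ K ⊓ L
  · rw [if_pos (h.trans inf_le_left), if_pos (h.trans inf_le_right), if_pos h]
    have key : K.index * L.index = m * (K ⊓ L).index := by
      rw [← Subgroup.relIndex_mul_index (inf_le_left : K ⊓ L ≤ K), hm]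
      ring
    exact_mod_cast key
  · rw [if_neg h]
    rw [le_inf_iff, not_and_or] at h
    rcases h with h | h
    · rw [if_neg h, zero_mul, mul_zero]
    · rw [if_neg h, mul_zero, mul_zero]

theorem mem_burnsideRing_iff_span (b : Subgroup S → ℤ) :
    b ∈ burnsideRing S ↔ b ∈ Submodule.span ℤ (Set.range (markVector S)) := by
  constructor
  · intro hb
    refine Subring.closure_induction (fun x hx => Submodule.subset_span hx) ?_ ?_ ?_ ?_ ?_ hb
    · exact Submodule.zero_mem _
    · exact Submodule.subset_span ⟨⊤, markVector_top⟩
    · exact fun x y _ _ hx hy => Submodule.add_mem _ hx hy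
    · exact fun x _ hx => Submodule.neg_mem _ hx
    · intro x y _ _ hx hy
      have hmul : x * y ∈ Submodule.span ℤ (Set.range (markVector S)) *
          Submodule.span ℤ (Set.range (markVector S)) := Submodule.mul_mem_mul hx hy
      rw [Submodule.span_mul_span] at hmul
      refine Submodule.span_le.mpr ?_ hmul
      rw [Set.mul_subset_iff]
      rintro _ ⟨K, rfl⟩ _ ⟨L, rfl⟩
      obtain ⟨n, hn⟩ := markVector_mul K L
      rw [hn]
      exact Submodule.smul_mem _ _ (Submodule.subset_span ⟨K ⊓ L, rfl⟩)
  · intro hb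
    refine Submodule.span_induction (fun x hx => Subring.subset_closure hx) ?_ ?_ ?_ hb
    · exact zero_mem _
    · exact fun x y _ _ hx hy => add_mem hx hy
    · exact fun a x _ hx => zsmul_mem hx a

theorem sum_sup_zpowers_dvd [Fintype S] {b : Subgroup S → ℤ} (hb : b ∈ burnsideRing S)
    (P : Subgroup S) :
    (Nat.card S : ℤ) ∣ ∑ g : S, b (P ⊔ Subgroup.zpowers g) := by
  rw [mem_burnsideRing_iff_span] at hb
  induction hb using Submodule.span_induction with
  | mem x hx =>
    obtain ⟨K, rfl⟩ := hx
    have hval : ∀ g : S, markVector S K (P ⊔ Subgroup.zpowers g)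
        = if P ≤ K then (if g ∈ K then (K.index : ℤ) else 0) else 0 := by
      intro g
      rw [markVector_comm]
      by_cases h1 : P ≤ K
      · by_cases h2 : g ∈ K
        · rw [if_pos (sup_le h1 (Subgroup.zpowers_le.mpr h2)), if_pos h1, if_pos h2]
        · rw [if_neg, if_pos h1, if_neg h2]
          intro hle
          exact h2 (hle (Subgroup.mem_sup_right (Subgroup.mem_zpowers g)))
      · rw [if_neg, if_neg h1]
        exact fun hle => h1 (le_sup_left.trans hle)
    simp only [hval]
    by_cases h1 : P ≤ K
    · simp only [if_pos h1]
      classical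
      rw [← Finset.sum_filter]
      rw [Finset.sum_const]
      have hcard : (Finset.univ.filter (fun g => g ∈ K)).card = Nat.card ↥K := by
        rw [Nat.card_eq_fintype_card, Fintype.card_subtype]
      rw [hcard]
      have : (Nat.card ↥K) • (K.index : ℤ) = ((Nat.card ↥K * K.index : ℕ) : ℤ) := by
        push_cast
        rw [nsmul_eq_mul]
      rw [this, Subgroup.card_mul_index]
    · simp only [if_neg h1, Finset.sum_const_zero]
      exact dvd_zero _
  | zero => simp
  | add x y _ _ hx hy =>
    simp only [Pi.add_apply, Finset.sum_add_distrib]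
    exact dvd_add hx hy
  | smul a x _ hx =>
    simp only [Pi.smul_apply, smul_eq_mul, ← Finset.mul_sum]
    exact Dvd.dvd.mul_left hx a

theorem unit_apply {u : Subgroup S → ℤ} (hu2 : u * u = 1) (P : Subgroup S) :
    u P = 1 ∨ u P = -1 := by
  have := congrFun hu2 P
  simp only [Pi.mul_apply, Pi.one_apply] at this
  exact Int.isUnit_iff.mp (IsUnit.of_mul_eq_one _ this)

theorem isCoatom_of_index_two {G : Type*} [Group G] {P : Subgroup G} (h : P.index = 2) :
    IsCoatom P := by
  constructor
  · intro htop
    rw [htop, Subgroup.index_top] at h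
    omega
  · intro Q hQ
    have hdvd : Q.index ∣ 2 := h ▸ Subgroup.index_dvd_of_le hQ.le
    rcases (Nat.dvd_prime Nat.prime_two).mp hdvd with h1 | h2
    · exact Subgroup.index_eq_one.mp h1
    · exfalso
      have hrel := Subgroup.relIndex_mul_index hQ.le
      rw [h2, h] at hrel
      have hone : P.relIndex Q = 1 := by omega
      exact hQ.not_ge (Subgroup.relIndex_eq_one.mp hone)

theorem index_of_coatom (hS : IsPGroup 2 S) {P : Subgroup S} (h : IsCoatom P) :
    P.index = 2 := by
  haveI := Subgroup.normal_of_comm P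
  haveI : Fact (Nat.Prime 2) := ⟨Nat.prime_two⟩
  have hq : IsPGroup 2 (S ⧸ P) := hS.to_quotient P
  haveI : Fintype (S ⧸ P) := Fintype.ofFinite _
  have hne : Nat.card (S ⧸ P) ≠ 1 := by
    intro h1
    exact h.1 (Subgroup.index_eq_one.mp (by rw [Subgroup.index_eq_card, h1]))
  have hdvd : 2 ∣ Fintype.card (S ⧸ P) := by
    obtain ⟨n, hn⟩ := hq.exists_card_eq
    rw [Nat.card_eq_fintype_card] at hn hne
    rcases n with _ | n
    · simp [hn] at hne
    · rw [hn]
      exact dvd_pow_self 2 (Nat.succ_ne_zero n)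
  obtain ⟨x, hx⟩ := exists_prime_orderOf_dvd_card 2 hdvd
  set Q := Subgroup.comap (QuotientGroup.mk' P) (Subgroup.zpowers x) with hQdef
  have hPQ : P ≤ Q := by
    intro p hp
    have : (QuotientGroup.mk' P) p = 1 := (QuotientGroup.eq_one_iff p).mpr hp
    simp only [hQdef, Subgroup.mem_comap, this]
    exact one_mem _
  obtain ⟨g, hg⟩ := QuotientGroup.mk'_surjective P x
  have hgQ : g ∈ Q := by
    simp only [hQdef, Subgroup.mem_comap, hg]
    exact Subgroup.mem_zpowers x
  have hgP : g ∉ P := by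
    intro hgP
    have : x = 1 := by rw [← hg]; exact (QuotientGroup.eq_one_iff g).mpr hgP
    rw [this, orderOf_one] at hx
    omega
  have hQtop : Q = ⊤ := h.2 Q (lt_of_le_of_ne hPQ (fun he => hgP (he ▸ hgQ)))
  have hzp : Subgroup.zpowers x = ⊤ := by
    have := Subgroup.map_comap_eq_self_of_surjective (QuotientGroup.mk'_surjective P)
      (Subgroup.zpowers x)
    rw [← this, ← hQdef, hQtop]
    rw [Subgroup.map_top_of_surjective _ (QuotientGroup.mk'_surjective P)]
  have hcard : Nat.card (S ⧸ P) = 2 := by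
    rw [← Subgroup.card_top, ← hzp, Nat.card_zpowers, hx]
  rw [Subgroup.index_eq_card, hcard]

end BurnsideAbelian


section BurnsideUnitsAbelian

set_option linter.unusedSectionVars false
open scoped Classical

variable {S : Type*} [CommGroup S] [Finite S]

theorem unit_eq_one (hS : IsPGroup 2 S) {u : Subgroup S → ℤ}
    (hu : u ∈ burnsideRing S) (hu2 : u * u = 1) (htop : u ⊤ = 1)
    (hco : ∀ N : Subgroup S, IsCoatom N → u N = 1) : u = 1 := by
  haveI : Fintype S := Fintype.ofFinite S
  funext P
  rw [Pi.one_apply]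
  induction P using IsWellFounded.induction (fun a b : Subgroup S => a > b) with
  | ind P IH =>
    rcases unit_apply hu2 P with h1 | hm1
    · exact h1
    exfalso
    have hdvd := sum_sup_zpowers_dvd hu P
    have hval : ∀ g : S, u (P ⊔ Subgroup.zpowers g) = if g ∈ P then (-1 : ℤ) else 1 := by
      intro g
      by_cases hg : g ∈ P
      · rw [if_pos hg, sup_eq_left.mpr (Subgroup.zpowers_le.mpr hg), hm1]
      · rw [if_neg hg]
        refine IH (P ⊔ Subgroup.zpowers g) ?_
        refine lt_of_le_of_ne le_sup_left (fun he => hg ?_)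
        exact Subgroup.zpowers_le.mp (he ▸ le_sup_right)
    have hsplit : ∀ g : S, (if g ∈ P then (-1 : ℤ) else 1) = 1 - (if g ∈ P then 2 else 0) := by
      intro g; split_ifs <;> ring
    have hsum : ∑ g : S, u (P ⊔ Subgroup.zpowers g)
        = (Nat.card S : ℤ) - 2 * (Nat.card ↥P : ℤ) := by
      simp only [hval, hsplit]
      rw [Finset.sum_sub_distrib, Finset.sum_const, ← Finset.sum_filter, Finset.sum_const]
      have hcard : (Finset.univ.filter (fun g => g ∈ P)).card = Nat.card ↥P := by
        rw [Nat.card_eq_fintype_card, Fintype.card_subtype]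
      rw [hcard, Finset.card_univ, ← Nat.card_eq_fintype_card]
      push_cast
      ring
    rw [hsum] at hdvd
    have hdvd2 : (Nat.card S : ℤ) ∣ 2 * (Nat.card ↥P : ℤ) := by
      have := dvd_sub (dvd_refl (Nat.card S : ℤ)) hdvd
      simpa using this
    have hcard : ((Nat.card ↥P : ℤ) * P.index : ℤ) = (Nat.card S : ℤ) := by
      exact_mod_cast congrArg (Nat.cast : ℕ → ℤ) (Subgroup.card_mul_index P)
    rw [← hcard, mul_comm (2 : ℤ)] at hdvd2
    have hPpos : (Nat.card ↥P : ℤ) ≠ 0 := by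
      have := Nat.card_pos (α := ↥P)
      omega
    have hidx : (P.index : ℤ) ∣ 2 := (mul_dvd_mul_iff_left hPpos).mp hdvd2
    have hidx' : P.index ∣ 2 := by exact_mod_cast hidx
    rcases (Nat.dvd_prime Nat.prime_two).mp hidx' with h1 | h2
    · rw [Subgroup.index_eq_one.mp h1, htop] at hm1
      omega
    · rw [hco P (isCoatom_of_index_two h2)] at hm1
      omega

theorem vUnit_sq (M : Subgroup S) : vUnit S M * vUnit S M = 1 := by
  funext P
  by_cases h : P ≤ M <;> simp [vUnit, h]

theorem vUnit_apply_of_le {M P : Subgroup S} (h : P ≤ M) : vUnit S M P = -1 := by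
  simp [vUnit, h]

theorem vUnit_apply_of_not_le {M P : Subgroup S} (h : ¬ P ≤ M) : vUnit S M P = 1 := by
  simp [vUnit, h]

theorem vUnit_apply_top {M : Subgroup S} (h : IsCoatom M) : vUnit S M ⊤ = 1 :=
  vUnit_apply_of_not_le (fun hle => h.1 (top_le_iff.mp hle))

theorem coatom_le_coatom_iff {M N : Subgroup S} (hM : IsCoatom M) (hN : IsCoatom N) :
    N ≤ M ↔ N = M := by
  constructor
  · intro hle
    by_contra hne
    exact hM.1 (hN.2 M (lt_of_le_of_ne hle hne))
  · intro h; rw [h]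

theorem vUnit_apply_coatom {M N : Subgroup S} (hM : IsCoatom M) (hN : IsCoatom N) :
    vUnit S M N = if N = M then -1 else 1 := by
  by_cases h : N = M
  · rw [if_pos h, vUnit_apply_of_le (le_of_eq h)]
  · rw [if_neg h, vUnit_apply_of_not_le (fun hle => h ((coatom_le_coatom_iff hM hN).mp hle))]

theorem vUnit_mem_burnsideRing (hS : IsPGroup 2 S) {M : Subgroup S} (hM : IsCoatom M) :
    vUnit S M ∈ burnsideRing S := by
  have hidx := index_of_coatom hS hM
  have hv : vUnit S M = 1 - markVector S M := by
    funext P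
    rw [Pi.sub_apply, Pi.one_apply, markVector_comm, hidx]
    by_cases h : P ≤ M
    · rw [if_pos h, vUnit_apply_of_le h]; norm_num
    · rw [if_neg h, vUnit_apply_of_not_le h]; norm_num
  rw [hv]
  exact sub_mem (one_mem _) (Subring.subset_closure (Set.mem_range_self M))

theorem prod_vUnit_apply (T : Finset (Subgroup S)) (P : Subgroup S) :
    (∏ N ∈ T, vUnit S N) P = ∏ N ∈ T, vUnit S N P :=
  Finset.prod_apply P T _

theorem prod_vUnit_sq (T : Finset (Subgroup S)) :
    (∏ N ∈ T, vUnit S N) * (∏ N ∈ T, vUnit S N) = 1 := by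
  funext P
  simp only [Pi.mul_apply, Pi.one_apply, prod_vUnit_apply]
  rw [← Finset.prod_mul_distrib]
  refine Finset.prod_eq_one (fun N _ => ?_)
  have := congrFun (vUnit_sq (S := S) N) P
  simpa using this

theorem prod_vUnit_apply_top (T : Finset (Subgroup S)) (hT : ∀ N ∈ T, IsCoatom N) :
    (∏ N ∈ T, vUnit S N) ⊤ = 1 := by
  rw [prod_vUnit_apply]
  exact Finset.prod_eq_one (fun N hN => vUnit_apply_top (hT N hN))

theorem prod_vUnit_apply_coatom (T : Finset (Subgroup S)) (hT : ∀ N ∈ T, IsCoatom N)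
    {N₀ : Subgroup S} (hN₀ : IsCoatom N₀) :
    (∏ N ∈ T, vUnit S N) N₀ = if N₀ ∈ T then -1 else 1 := by
  rw [prod_vUnit_apply]
  have : ∀ N ∈ T, vUnit S N N₀ = if N₀ = N then -1 else 1 :=
    fun N hN => vUnit_apply_coatom (hT N hN) hN₀
  rw [Finset.prod_congr rfl this]
  have := Finset.prod_ite_eq T N₀ (fun _ => (-1 : ℤ))
  simpa using this

theorem unit_decomp (hS : IsPGroup 2 S) {u : Subgroup S → ℤ}
    (hu : u ∈ burnsideRing S) (hu2 : u * u = 1) (T : Finset (Subgroup S))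
    (hT : ∀ N, N ∈ T ↔ IsCoatom N ∧ u N ≠ u ⊤) :
    u = (fun _ => u ⊤) * ∏ N ∈ T, vUnit S N := by
  have hTc : ∀ N ∈ T, IsCoatom N := fun N hN => ((hT N).mp hN).1
  set ε := u ⊤ with hε
  have hεv : ε = 1 ∨ ε = -1 := unit_apply hu2 ⊤
  have hε2 : ε * ε = 1 := by rcases hεv with h | h <;> rw [h] <;> norm_num
  set w := ∏ N ∈ T, vUnit S N with hw
  have hconst : (fun _ : Subgroup S => ε) ∈ burnsideRing S := by
    rcases hεv with h | h <;> rw [h]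
    · exact one_mem _
    · have : (fun _ : Subgroup S => (-1 : ℤ)) = -(1 : Subgroup S → ℤ) := rfl
      rw [this]; exact neg_mem (one_mem _)
  have hwring : w ∈ burnsideRing S :=
    prod_mem (fun N hN => vUnit_mem_burnsideRing hS (hTc N hN))
  set u' := u * ((fun _ : Subgroup S => ε) * w) with hu'
  have hu'ring : u' ∈ burnsideRing S := mul_mem hu (mul_mem hconst hwring)
  have hu'2 : u' * u' = 1 := by
    funext P
    have h1 := congrFun hu2 P
    have h2 := congrFun (prod_vUnit_sq T) P
    simp only [Pi.mul_apply, Pi.one_apply] at h1 h2 ⊢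
    calc u P * (ε * w P) * (u P * (ε * w P))
        = (u P * u P) * ((ε * ε) * (w P * w P)) := by ring
      _ = 1 := by rw [h1, hε2, h2]; norm_num
  have hu'top : u' ⊤ = 1 := by
    have hwtop : w ⊤ = 1 := by rw [hw]; exact prod_vUnit_apply_top T hTc
    simp only [hu', Pi.mul_apply]
    rw [hwtop, mul_one, ← hε, hε2]
  have hu'co : ∀ N : Subgroup S, IsCoatom N → u' N = 1 := by
    intro N hN
    have hwN : w N = if N ∈ T then -1 else 1 := by
      rw [hw]; exact prod_vUnit_apply_coatom T hTc hN
    simp only [hu', Pi.mul_apply]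
    rw [hwN]
    by_cases hNT : N ∈ T
    · rw [if_pos hNT]
      have hune : u N ≠ ε := ((hT N).mp hNT).2
      rcases unit_apply hu2 N with h | h <;> rcases hεv with h' | h'
      · exact absurd (h.trans h'.symm) hune
      · rw [h, h']; norm_num
      · rw [h, h']; norm_num
      · exact absurd (h.trans h'.symm) hune
    · rw [if_neg hNT]
      have hueq : u N = ε := by
        by_contra hne
        exact hNT ((hT N).mpr ⟨hN, hne⟩)
      rw [hueq, mul_one, hε2]
  have h1 : u' = 1 := unit_eq_one hS hu'ring hu'2 hu'top hu'co
  funext P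
  have := congrFun h1 P
  have h2 := congrFun hu2 P
  have h3 := congrFun (prod_vUnit_sq T) P
  simp only [hu', Pi.mul_apply, Pi.one_apply] at this h2 h3 ⊢
  calc u P = u P * ((ε * ε) * (w P * w P)) := by rw [hε2, h3]; ring
    _ = (u P * (ε * w P)) * (ε * w P) := by ring
    _ = ε * w P := by rw [this, one_mul]

theorem unit_decomp_unique {ε ε' : ℤ} (hε : ε ≠ 0) (T T' : Finset (Subgroup S))
    (hTc : ∀ N ∈ T, IsCoatom N) (hT'c : ∀ N ∈ T', IsCoatom N)
    (h : (fun _ : Subgroup S => ε) * ∏ N ∈ T, vUnit S N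
        = (fun _ : Subgroup S => ε') * ∏ N ∈ T', vUnit S N) :
    ε = ε' ∧ T = T' := by
  have htop := congrFun h ⊤
  simp only [Pi.mul_apply, prod_vUnit_apply_top T hTc, prod_vUnit_apply_top T' hT'c,
    mul_one] at htop
  refine ⟨htop, ?_⟩
  ext N
  by_cases hN : IsCoatom N
  · have hh := congrFun h N
    simp only [Pi.mul_apply, prod_vUnit_apply_coatom T hTc hN,
      prod_vUnit_apply_coatom T' hT'c hN, ← htop] at hh
    have := mul_left_cancel₀ hε hh
    by_cases h1 : N ∈ T <;> by_cases h2 : N ∈ T' <;> simp_all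
  · constructor
    · intro hmem; exact absurd (hTc N hmem) hN
    · intro hmem; exact absurd (hT'c N hmem) hN

end BurnsideUnitsAbelian


section FusionAbelian

set_option linter.unusedSectionVars false
open scoped Classical

variable {S : Type*} [CommGroup S] [Finite S]

theorem map_mul_aut (α β : MulAut S) (K : Subgroup S) :
    K.map (α * β : MulAut S).toMonoidHom = (K.map β.toMonoidHom).map α.toMonoidHom := by
  rw [Subgroup.map_map]
  rfl

theorem map_aut_inv_map (α : MulAut S) (K : Subgroup S) :
    (K.map α.toMonoidHom).map (α⁻¹ : MulAut S).toMonoidHom = K := by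
  rw [Subgroup.map_map]
  have h : ((α⁻¹ : MulAut S).toMonoidHom.comp α.toMonoidHom) = MonoidHom.id S := by
    ext x
    simp [MulAut.inv_def]
  rw [h, Subgroup.map_id]

theorem map_inv_aut_map (α : MulAut S) (K : Subgroup S) :
    (K.map (α⁻¹ : MulAut S).toMonoidHom).map α.toMonoidHom = K := by
  have h := map_aut_inv_map α⁻¹ K
  rwa [inv_inv] at h

theorem map_aut_le_iff (β : MulAut S) (P N : Subgroup S) :
    P.map β.toMonoidHom ≤ N ↔ P ≤ N.map (β⁻¹ : MulAut S).toMonoidHom := by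
  constructor
  · intro h
    have h2 := Subgroup.map_mono (f := (β⁻¹ : MulAut S).toMonoidHom) h
    rwa [map_aut_inv_map] at h2
  · intro h
    have h2 := Subgroup.map_mono (f := β.toMonoidHom) h
    rwa [map_inv_aut_map] at h2

theorem autAct_vUnit (α : MulAut S) (M : Subgroup S) :
    autAct α.toMonoidHom (vUnit S M) = vUnit S (M.map α.toMonoidHom) := by
  funext Q
  show vUnit S M (Q.comap α.toMonoidHom) = vUnit S (M.map α.toMonoidHom) Q
  have hiff : Q.comap α.toMonoidHom ≤ M ↔ Q ≤ M.map α.toMonoidHom := by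
    constructor
    · intro h
      have h2 := Subgroup.map_mono (f := α.toMonoidHom) h
      rwa [Subgroup.map_comap_eq_self_of_surjective α.surjective] at h2
    · intro h
      have h2 := Subgroup.comap_mono (f := α.toMonoidHom) h
      rwa [Subgroup.comap_map_eq_self_of_injective α.injective] at h2
  by_cases h : Q ≤ M.map α.toMonoidHom
  · rw [vUnit_apply_of_le (hiff.mpr h), vUnit_apply_of_le h]
  · rw [vUnit_apply_of_not_le (fun hh => h (hiff.mp hh)), vUnit_apply_of_not_le h]

theorem card_map_aut (α : MulAut S) (K : Subgroup S) :
    Nat.card ↥(K.map α.toMonoidHom) = Nat.card ↥K :=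
  (Nat.card_congr (Subgroup.equivMapOfInjective K α.toMonoidHom α.injective).toEquiv).symm

theorem index_map_aut (α : MulAut S) (K : Subgroup S) :
    (K.map α.toMonoidHom).index = K.index := by
  have h1 := Subgroup.card_mul_index (K.map α.toMonoidHom)
  have h2 := Subgroup.card_mul_index K
  rw [card_map_aut] at h1
  haveI : Nonempty ↥K := ⟨1⟩
  have hpos : 0 < Nat.card ↥K := Nat.card_pos
  exact Nat.eq_of_mul_eq_mul_left hpos (h1.trans h2.symm)

theorem isCoatom_map_aut (hS : IsPGroup 2 S) (α : MulAut S) {K : Subgroup S}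
    (h : IsCoatom K) : IsCoatom (K.map α.toMonoidHom) := by
  refine isCoatom_of_index_two ?_
  rw [index_map_aut]
  exact index_of_coatom hS h

theorem subconj_refl (F : FusionSystem S) (P : Subgroup S) : F.SubConj P P :=
  (fconjSetoid F).iseqv.refl P

theorem subconj_symm (F : FusionSystem S) {P Q : Subgroup S} (h : F.SubConj P Q) :
    F.SubConj Q P := (fconjSetoid F).iseqv.symm h

theorem subconj_trans (F : FusionSystem S) {P Q R : Subgroup S} (h1 : F.SubConj P Q)
    (h2 : F.SubConj Q R) : F.SubConj P R := (fconjSetoid F).iseqv.trans h1 h2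

theorem subconj_of_autFS (F : FusionSystem S) {α : MulAut S} (hα : α ∈ F.AutFS)
    (P : Subgroup S) : F.SubConj P (P.map α.toMonoidHom) := by
  have hincl : ∀ x ∈ P, (1 : S) * x * (1 : S)⁻¹ ∈ (⊤ : Subgroup S) := fun x _ => trivial
  have h1 : conjMap (1 : S) P ⊤ hincl ∈ F.Hom P ⊤ := F.conj_mem 1 P ⊤ hincl
  have hα' : (topRestrict α).toMonoidHom ∈ F.Hom ⊤ ⊤ := hα
  have h2 : ((topRestrict α).toMonoidHom.comp (conjMap (1 : S) P ⊤ hincl)) ∈ F.Hom P ⊤ :=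
    F.comp_mem h1 hα'
  obtain ⟨R, hRle, e, he, hee⟩ := F.factor_mem h2
  have hcoe : ∀ x : ↥P, ((e x : ↥R) : S) = α (x : S) := by
    intro x
    rw [hee x]
    simp [conjMap, topRestrict]
  have hRP : R = P.map α.toMonoidHom := by
    ext y
    rw [Subgroup.mem_map]
    constructor
    · intro hy
      obtain ⟨x, hx⟩ := e.surjective ⟨y, hy⟩
      refine ⟨(x : S), x.2, ?_⟩
      show α ((x : S)) = y
      rw [← hcoe x]
      exact congrArg (fun t : ↥R => (t : S)) hx
    · rintro ⟨x, hx, rfl⟩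
      show α x ∈ R
      rw [← hcoe ⟨x, hx⟩]
      exact (e ⟨x, hx⟩).2
  rw [← hRP]
  exact ⟨e.toMonoidHom, he, e.surjective⟩

theorem exists_autFS_map_eq (F : FusionSystem S) (hF : F.IsSaturated 2)
    {P Q : Subgroup S} (h : F.SubConj P Q) :
    ∃ α : MulAut S, α ∈ F.AutFS ∧ P.map α.toMonoidHom = Q := by
  obtain ⟨R, hPR, -, hrec⟩ := hF P
  have key : ∀ A : Subgroup S, F.SubConj A R →
      ∃ β : MulAut S, β ∈ F.AutFS ∧ A.map β.toMonoidHom = R := by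
    rintro A ⟨f, hf, hfs⟩
    have hbij : Function.Bijective ⇑f := ⟨F.inj hf, hfs⟩
    set φ := MulEquiv.ofBijective f hbij with hφdef
    have hφmem : φ.toMonoidHom ∈ F.Hom A R := by
      have hh : φ.toMonoidHom = f := by ext x; rfl
      rwa [hh]
    obtain ⟨T, hT, ψ, hψmem, hψ⟩ := hrec A φ hφmem
    have hnorm : Subgroup.normalizer (A : Set S) = ⊤ :=
      Subgroup.normalizer_eq_top_iff.mpr (Subgroup.normal_of_comm A)
    have hTtop : T = ⊤ := by
      rw [eq_top_iff]
      intro g _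
      rw [← SetLike.mem_coe, hT]
      refine ⟨hnorm.symm ▸ Subgroup.mem_top g, 1, ?_⟩
      intro x hx
      rw [inv_one, mul_one, one_mul]
      exact congrArg (fun t : ↥A => ((φ t : ↥R) : S)) (Subtype.ext (conj_eq_self g x))
    subst hTtop
    have hψbij : Function.Bijective ⇑ψ := Finite.injective_iff_bijective.mp (F.inj hψmem)
    set e := MulEquiv.ofBijective ψ hψbij with hedef
    set β : MulAut S := (Subgroup.topEquiv.symm.trans e).trans Subgroup.topEquiv with hβdef
    have hβcoe : ∀ s : S, β s = ((ψ ⟨s, Subgroup.mem_top s⟩ : ↥(⊤ : Subgroup S)) : S) :=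
      fun s => rfl
    have hβmem : β ∈ F.AutFS := by
      show (topRestrict β).toMonoidHom ∈ F.Hom ⊤ ⊤
      have h4 : topRestrict β = e := by
        ext x
        rfl
      have h5 : e.toMonoidHom = ψ := by ext x; rfl
      rw [h4, h5]
      exact hψmem
    refine ⟨β, hβmem, ?_⟩
    ext y
    rw [Subgroup.mem_map]
    constructor
    · rintro ⟨x, hx, rfl⟩
      show β x ∈ R
      rw [hβcoe, hψ x hx (Subgroup.mem_top x)]
      exact (φ ⟨x, hx⟩).2
    · intro hy
      obtain ⟨x, hx⟩ := φ.surjective ⟨y, hy⟩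
      refine ⟨(x : S), x.2, ?_⟩
      show β ((x : S)) = y
      rw [hβcoe, hψ (x : S) x.2 (Subgroup.mem_top _)]
      exact congrArg (fun t : ↥R => (t : S)) hx
  obtain ⟨β₂, hβ₂, hPβ⟩ := key P hPR
  obtain ⟨β₁, hβ₁, hQβ⟩ := key Q (subconj_trans F (subconj_symm F h) hPR)
  refine ⟨β₁⁻¹ * β₂, mul_mem (inv_mem hβ₁) hβ₂, ?_⟩
  rw [map_mul_aut, hPβ, ← hQβ, map_aut_inv_map]

theorem subconj_top_eq (F : FusionSystem S) {Q : Subgroup S} (h : F.SubConj ⊤ Q) :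
    Q = ⊤ := by
  obtain ⟨f, hf, hfs⟩ := h
  have hbij : Function.Bijective ⇑f := ⟨F.inj hf, hfs⟩
  have hcard := Nat.card_congr (Equiv.ofBijective _ hbij)
  rw [Subgroup.card_top] at hcard
  exact Subgroup.eq_top_of_card_eq Q hcard.symm

theorem subconj_coatom (F : FusionSystem S) (hS : IsPGroup 2 S) (hF : F.IsSaturated 2)
    {P Q : Subgroup S} (h : F.SubConj P Q) (hP : IsCoatom P) : IsCoatom Q := by
  obtain ⟨α, hα, hmap⟩ := exists_autFS_map_eq F hF h
  rw [← hmap]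
  exact isCoatom_map_aut hS α hP

theorem conj_range_eq_bot : (MulAut.conj : S →* MulAut S).range = ⊥ := by
  rw [eq_bot_iff]
  rintro α ⟨s, rfl⟩
  rw [Subgroup.mem_bot]
  ext x
  simp [conj_eq_self]

theorem relTrace_eq_prod (Γ : Subgroup (MulAut S)) (b : Subgroup S → ℤ) :
    relTrace Γ (MulAut.conj : S →* MulAut S).range b
      = ∏ᶠ α : ↥Γ, autAct ((α : MulAut S)).toMonoidHom b := by
  unfold relTrace
  rw [conj_range_eq_bot, Subgroup.bot_subgroupOf]
  have hmk : Function.Injective (QuotientGroup.mk : ↥Γ → ↥Γ ⧸ (⊥ : Subgroup ↥Γ)) := by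
    intro a b hab
    have h := (QuotientGroup.eq (s := (⊥ : Subgroup ↥Γ))).mp hab
    rw [Subgroup.mem_bot] at h
    exact inv_mul_eq_one.mp h
  have hbij : Function.Bijective (Quotient.out : (↥Γ ⧸ (⊥ : Subgroup ↥Γ)) → ↥Γ) := by
    constructor
    · exact Quotient.out_injective
    · intro α
      refine ⟨QuotientGroup.mk α, hmk ?_⟩
      exact QuotientGroup.out_eq' _
  exact finprod_eq_of_bijective Quotient.out hbij (fun c => rfl)

theorem not_two_dvd_card_autFS (F : FusionSystem S) (hF : F.IsSaturated 2) :
    ¬ 2 ∣ Nat.card ↥F.AutFS := by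
  obtain ⟨Q, hQ, hfa, -⟩ := hF ⊤
  have hQtop : Q = ⊤ := subconj_top_eq F hQ
  subst hQtop
  obtain ⟨-, -, hndvd⟩ := hfa
  have hAutS : AutS (⊤ : Subgroup S) = ⊥ := by
    rw [eq_bot_iff]
    intro α hα
    obtain ⟨s, rfl⟩ := MonoidHom.mem_range.mp hα
    rw [Subgroup.mem_bot]
    ext x
    simp [conjAutHom, conjAut, conj_eq_self]
  rw [hAutS, Subgroup.bot_subgroupOf, Subgroup.index_bot] at hndvd
  have hcard : Nat.card ↥F.AutFS = Nat.card ↥(F.AutF (⊤ : Subgroup S)) := by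
    refine Nat.card_eq_of_bijective (fun α => ⟨topRestrict (α : MulAut S), α.2⟩) ⟨?_, ?_⟩
    · intro a b hab
      have h1 : topRestrict (a : MulAut S) = topRestrict (b : MulAut S) :=
        congrArg Subtype.val hab
      refine Subtype.ext ?_
      ext x
      have h2 := congrArg
        (fun eqv : MulAut ↥(⊤ : Subgroup S) =>
          ((eqv (⟨x, Subgroup.mem_top x⟩ : ↥(⊤ : Subgroup S)) : ↥(⊤ : Subgroup S)) : S)) h1
      simpa [topRestrict] using h2
    · rintro ⟨γ, hγ⟩
      refine ⟨⟨((Subgroup.topEquiv.symm.trans (γ.trans Subgroup.topEquiv)) : MulAut S), ?_⟩, ?_⟩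
      · show (topRestrict _).toMonoidHom ∈ F.Hom ⊤ ⊤
        have h3 : topRestrict
            ((Subgroup.topEquiv.symm.trans (γ.trans Subgroup.topEquiv)) : MulAut S) = γ := by
          ext x
          rfl
        rw [h3]
        exact hγ
      · refine Subtype.ext ?_
        show topRestrict _ = γ
        ext x
        rfl
  rwa [hcard]

end FusionAbelian


theorem statement18 {S : Type*} [CommGroup S] [Finite S] (hS : IsPGroup 2 S)
    (F : FusionSystem S) (hF : F.IsSaturated 2)
    (s : ℕ) (M : Fin s → Subgroup S)
    (hmax : ∀ i, IsCoatom (M i))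
    (hdist : ∀ i j, F.SubConj (M i) (M j) → i = j)
    (hrep : ∀ N : Subgroup S, IsCoatom N → ∃ i, F.SubConj N (M i)) :
    Nat.card ↥F.burnsideUnits = 2 ^ (s + 1) ∧
    ((-1 : Subgroup S → ℤ) ∈ F.burnsideUnits) ∧
    (∀ i, relTrace F.AutFS (MulAut.conj : S →* MulAut S).range (vUnit S (M i))
      ∈ F.burnsideUnits) ∧
    (∀ u ∈ F.burnsideUnits,
      ∃! q : Bool × Finset (Fin s),
        u = (if q.1 then -1 else 1) *
          ∏ i ∈ q.2, relTrace F.AutFS (MulAut.conj : S →* MulAut S).range (vUnit S (M i))) := by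
  classical
  haveI : Fintype S := Fintype.ofFinite S
  haveI : Finite (MulAut S) := Finite.of_injective (fun α : MulAut S => (α : S → S))
      (fun a b hab => by ext x; exact congrFun hab x)
  haveI : Fintype ↥F.AutFS := Fintype.ofFinite _
  haveI : Fintype (Subgroup S) := Fintype.ofFinite _
  have hFmem : ∀ b : Subgroup S → ℤ, b ∈ F.burnside ↔ b ∈ burnsideRing S ∧
      ∀ P Q : Subgroup S, F.SubConj P Q → b P = b Q := fun b => Iff.rfl
  set O : Fin s → Finset (Subgroup S) :=
    fun i => Finset.univ.filter (fun N => F.SubConj (M i) N) with hO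
  have hOmem : ∀ i N, N ∈ O i ↔ F.SubConj (M i) N := by
    intro i N
    simp [hO]
  have hOco : ∀ i, ∀ N ∈ O i, IsCoatom N := fun i N hN =>
    subconj_coatom F hS hF ((hOmem i N).mp hN) (hmax i)
  have hodd := not_two_dvd_card_autFS F hF
  -- the trace of `v_{M i}` is the product of the `v_N` over the `F`-conjugacy class of `M i`
  have ht_eq : ∀ i, relTrace F.AutFS (MulAut.conj : S →* MulAut S).range (vUnit S (M i))
      = ∏ N ∈ O i, vUnit S N := by
    intro i
    rw [relTrace_eq_prod, finprod_eq_prod_of_fintype]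
    set g : ↥F.AutFS → Subgroup S :=
      fun α => (M i).map ((α : MulAut S)).toMonoidHom with hg
    have h1 : ∀ α : ↥F.AutFS, autAct ((α : MulAut S)).toMonoidHom (vUnit S (M i))
        = vUnit S (g α) := fun α => autAct_vUnit _ _
    rw [Finset.prod_congr rfl (fun α _ => h1 α), Finset.prod_comp (vUnit S) g]
    have himg : Finset.univ.image g = O i := by
      ext N
      simp only [Finset.mem_image, Finset.mem_univ, true_and, hOmem]
      constructor
      · rintro ⟨α, rfl⟩
        exact subconj_of_autFS F α.2 (M i)
      · intro hconj
        obtain ⟨β, hβ, hmap⟩ := exists_autFS_map_eq F hF hconj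
        exact ⟨⟨β, hβ⟩, hmap⟩
    rw [himg]
    have hgmul : ∀ (δ α : ↥F.AutFS), g (δ * α)
        = (g α).map ((δ : MulAut S)).toMonoidHom := by
      intro δ α
      simp only [hg, Subgroup.coe_mul]
      rw [map_mul_aut]
    have hfib : ∀ N ∈ O i, (Finset.univ.filter (fun α : ↥F.AutFS => g α = N)).card
        = (Finset.univ.filter (fun α : ↥F.AutFS => g α = M i)).card := by
      intro N hN
      obtain ⟨β, hβ, hmap⟩ := exists_autFS_map_eq F hF ((hOmem i N).mp hN)
      have hmap' : g ⟨β, hβ⟩ = N := hmap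
      refine Finset.card_bij' (fun α _ => (⟨β, hβ⟩ : ↥F.AutFS)⁻¹ * α)
        (fun α _ => (⟨β, hβ⟩ : ↥F.AutFS) * α) ?_ ?_ ?_ ?_
      · intro α hα
        rw [Finset.mem_filter] at hα ⊢
        refine ⟨Finset.mem_univ _, ?_⟩
        rw [hgmul, hα.2, ← hmap]
        exact map_aut_inv_map β (M i)
      · intro α hα
        rw [Finset.mem_filter] at hα ⊢
        refine ⟨Finset.mem_univ _, ?_⟩
        rw [hgmul, hα.2]
        exact hmap
      · intro α _
        group
      · intro α _
        group
    have hcard2 : (Finset.univ : Finset ↥F.AutFS).card = (O i).card *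
        (Finset.univ.filter (fun α : ↥F.AutFS => g α = M i)).card := by
      have hsc := Finset.sum_congr rfl hfib
      rw [Finset.card_eq_sum_card_image g Finset.univ, himg, hsc, Finset.sum_const,
        smul_eq_mul]
    have hoddc : ¬ 2 ∣ (Finset.univ.filter (fun α : ↥F.AutFS => g α = M i)).card := by
      intro h2
      apply hodd
      rw [Nat.card_eq_fintype_card, ← Finset.card_univ, hcard2]
      exact Dvd.dvd.mul_left h2 _
    refine Finset.prod_congr rfl (fun N hN => ?_)
    rw [hfib N hN]
    funext P
    rw [Pi.pow_apply]
    by_cases hP : P ≤ N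
    · rw [vUnit_apply_of_le hP, (Nat.not_even_iff_odd.mp (fun he => hoddc he.two_dvd)).neg_one_pow]
    · rw [vUnit_apply_of_not_le hP, one_pow]
  -- membership of the traces in `B(F)ˣ`
  have ht_mem : ∀ i, relTrace F.AutFS (MulAut.conj : S →* MulAut S).range (vUnit S (M i))
      ∈ F.burnsideUnits := by
    intro i
    rw [ht_eq i]
    refine ⟨(hFmem _).mpr ⟨?_, ?_⟩, ?_⟩
    · exact prod_mem (fun N hN => vUnit_mem_burnsideRing hS (hOco i N hN))
    · intro P Q hPQ
      obtain ⟨β, hβ, hmap⟩ := exists_autFS_map_eq F hF hPQ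
      rw [prod_vUnit_apply, prod_vUnit_apply]
      refine Finset.prod_bij' (fun N _ => N.map (β.toMonoidHom))
          (fun N _ => N.map ((β⁻¹ : MulAut S)).toMonoidHom) ?_ ?_ ?_ ?_ ?_
      · intro N hN
        rw [hOmem] at hN ⊢
        exact subconj_trans F hN (subconj_of_autFS F hβ N)
      · intro N hN
        rw [hOmem] at hN ⊢
        exact subconj_trans F hN (subconj_of_autFS F (inv_mem hβ) N)
      · intro N _
        exact map_aut_inv_map β N
      · intro N _
        exact map_inv_aut_map β N
      · intro N _
        have hiff : Q ≤ N.map β.toMonoidHom ↔ P ≤ N := by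
          rw [← hmap, map_aut_le_iff β P (N.map β.toMonoidHom), map_aut_inv_map]
        by_cases hle : P ≤ N
        · rw [vUnit_apply_of_le hle, vUnit_apply_of_le (hiff.mpr hle)]
        · rw [vUnit_apply_of_not_le hle, vUnit_apply_of_not_le (fun hh => hle (hiff.mp hh))]
    · exact prod_vUnit_sq (O i)
  have honemem : (1 : Subgroup S → ℤ) ∈ F.burnsideUnits := ⟨one_mem _, one_mul 1⟩
  have hneg : (-1 : Subgroup S → ℤ) ∈ F.burnsideUnits :=
    ⟨(hFmem _).mpr ⟨neg_mem (one_mem _), fun P Q _ => rfl⟩, by rw [neg_mul_neg, one_mul]⟩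
  have hmulmem : ∀ u v : Subgroup S → ℤ, u ∈ F.burnsideUnits → v ∈ F.burnsideUnits →
      u * v ∈ F.burnsideUnits := by
    rintro u v ⟨hu1, hu2⟩ ⟨hv1, hv2⟩
    refine ⟨(hFmem _).mpr ⟨mul_mem ((hFmem u).mp hu1).1 ((hFmem v).mp hv1).1, ?_⟩, ?_⟩
    · intro P Q h
      simp only [Pi.mul_apply, ((hFmem u).mp hu1).2 P Q h, ((hFmem v).mp hv1).2 P Q h]
    · rw [mul_mul_mul_comm, hu2, hv2, one_mul]
  have hifmem : ∀ bb : Bool, (if bb then (-1 : Subgroup S → ℤ) else 1) ∈ F.burnsideUnits := by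
    intro bb
    cases bb
    · simpa using honemem
    · simpa using hneg
  have hprodmem : ∀ q : Finset (Fin s),
      (∏ i ∈ q, relTrace F.AutFS (MulAut.conj : S →* MulAut S).range (vUnit S (M i)))
        ∈ F.burnsideUnits := fun q =>
    Finset.prod_induction _ _ (fun a b ha hb => hmulmem a b ha hb) honemem (fun i _ => ht_mem i)
  have hOdisj : ∀ i j : Fin s, i ≠ j → Disjoint (O i) (O j) := by
    intro i j hij
    rw [Finset.disjoint_left]
    intro N hNi hNj
    exact hij (hdist i j (subconj_trans F ((hOmem i N).mp hNi)
      (subconj_symm F ((hOmem j N).mp hNj))))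
  have hMiOi : ∀ i, M i ∈ O i := fun i => (hOmem i (M i)).mpr (subconj_refl F (M i))
  have hMiOj : ∀ i j, M i ∈ O j → j = i := fun i j h => hdist j i ((hOmem j _).mp h)
  have hprodT : ∀ qq : Finset (Fin s), ∏ N ∈ qq.biUnion O, vUnit S N
      = ∏ i ∈ qq, relTrace F.AutFS (MulAut.conj : S →* MulAut S).range (vUnit S (M i)) := by
    intro qq
    rw [Finset.prod_biUnion (fun i _ j _ hij => hOdisj i j hij)]
    exact Finset.prod_congr rfl (fun i _ => (ht_eq i).symm)
  -- the key unique-decomposition statement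
  have key : ∀ u ∈ F.burnsideUnits,
      ∃! q : Bool × Finset (Fin s),
        u = (if q.1 then -1 else 1) *
          ∏ i ∈ q.2, relTrace F.AutFS (MulAut.conj : S →* MulAut S).range (vUnit S (M i)) := by
    intro u hu
    have huB : u ∈ burnsideRing S := ((hFmem u).mp hu.1).1
    have hust : ∀ P Q : Subgroup S, F.SubConj P Q → u P = u Q := ((hFmem u).mp hu.1).2
    have hu2 : u * u = 1 := hu.2
    have hεv := unit_apply hu2 ⊤
    set T : Finset (Subgroup S) :=
      Finset.univ.filter (fun N => IsCoatom N ∧ u N ≠ u ⊤) with hTdef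
    have hTspec : ∀ N, N ∈ T ↔ IsCoatom N ∧ u N ≠ u ⊤ := by
      intro N
      simp [hTdef]
    have hdecomp := unit_decomp hS huB hu2 T hTspec
    set q0 : Finset (Fin s) := Finset.univ.filter (fun i => M i ∈ T) with hq0def
    have hq0mem : ∀ i, i ∈ q0 ↔ M i ∈ T := by
      intro i
      simp [hq0def]
    have hTsplit : T = q0.biUnion O := by
      ext N
      constructor
      · intro hN
        obtain ⟨hco, hne⟩ := (hTspec N).mp hN
        obtain ⟨i, hi⟩ := hrep N hco
        refine Finset.mem_biUnion.mpr ⟨i, (hq0mem i).mpr ?_, (hOmem i N).mpr (subconj_symm F hi)⟩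
        refine (hTspec (M i)).mpr ⟨hmax i, ?_⟩
        rw [← hust N (M i) hi]
        exact hne
      · intro hN
        obtain ⟨i, hiq, hNi⟩ := Finset.mem_biUnion.mp hN
        obtain ⟨hco, hne⟩ := (hTspec (M i)).mp ((hq0mem i).mp hiq)
        refine (hTspec N).mpr ⟨hOco i N hNi, ?_⟩
        rw [← hust (M i) N ((hOmem i N).mp hNi)]
        exact hne
    obtain ⟨b0, hb0, hb0s⟩ : ∃ b0 : Bool,
        ((if b0 then (-1 : Subgroup S → ℤ) else 1) = (fun _ => u ⊤)) ∧
          (if b0 then (-1 : ℤ) else 1) = u ⊤ := by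
      rcases hεv with h | h
      · refine ⟨false, ?_, ?_⟩
        · rw [if_neg Bool.false_ne_true]
          funext P
          rw [h, Pi.one_apply]
        · rw [if_neg Bool.false_ne_true, h]
      · refine ⟨true, ?_, ?_⟩
        · rw [if_pos rfl]
          funext P
          rw [h, Pi.neg_apply, Pi.one_apply]
        · rw [if_pos rfl, h]
    refine ⟨(b0, q0), ?_, ?_⟩
    · show u = (if b0 then -1 else 1) *
        ∏ i ∈ q0, relTrace F.AutFS (MulAut.conj : S →* MulAut S).range (vUnit S (M i))
      rw [hb0, ← hprodT q0, ← hTsplit]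
      exact hdecomp
    · rintro ⟨b', q'⟩ hy
      obtain ⟨ε', hε'eq, hε's⟩ : ∃ ε' : ℤ,
          ((if b' then (-1 : Subgroup S → ℤ) else 1) = (fun _ => ε')) ∧
            (if b' then (-1 : ℤ) else 1) = ε' := by
        cases b'
        · refine ⟨1, ?_, if_neg Bool.false_ne_true⟩
          rw [if_neg Bool.false_ne_true]
          funext P
          rw [Pi.one_apply]
        · refine ⟨-1, ?_, if_pos rfl⟩
          rw [if_pos rfl]
          funext P
          rw [Pi.neg_apply, Pi.one_apply]
      have hy' : u = (fun _ : Subgroup S => ε') * ∏ N ∈ q'.biUnion O, vUnit S N := by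
        rw [hprodT q', ← hε'eq]
        exact hy
      have hεne : u ⊤ ≠ 0 := by
        rcases hεv with h | h <;> rw [h] <;> norm_num
      obtain ⟨hε'', hT''⟩ := unit_decomp_unique hεne T (q'.biUnion O)
        (fun N hN => ((hTspec N).mp hN).1)
        (fun N hN => by
          obtain ⟨i, _, hNi⟩ := Finset.mem_biUnion.mp hN
          exact hOco i N hNi)
        (by rw [← hdecomp, ← hy'])
      have hq' : q' = q0 := by
        ext i
        rw [hq0mem i]
        constructor
        · intro hiq'
          rw [hT'']
          exact Finset.mem_biUnion.mpr ⟨i, hiq', hMiOi i⟩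
        · intro hMiT
          rw [hT''] at hMiT
          obtain ⟨j, hj, hMij⟩ := Finset.mem_biUnion.mp hMiT
          rwa [← hMiOj i j hMij]
      have hb' : b' = b0 := by
        have e1 : (if b0 then (-1 : ℤ) else 1) = ε' := by rw [hb0s, hε'']
        have e3 : (if b' then (-1 : ℤ) else 1) = (if b0 then (-1 : ℤ) else 1) := by
          rw [e1, hε's]
        cases b' <;> cases b0
        · rfl
        · rw [if_neg Bool.false_ne_true, if_pos rfl] at e3
          omega
        · rw [if_pos rfl, if_neg Bool.false_ne_true] at e3
          omega
        · rfl
      rw [hb', hq']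
  refine ⟨?_, hneg, ht_mem, key⟩
  have hmem2 : ∀ p : Bool × Finset (Fin s),
      ((if p.1 then (-1 : Subgroup S → ℤ) else 1) *
        ∏ i ∈ p.2, relTrace F.AutFS (MulAut.conj : S →* MulAut S).range (vUnit S (M i)))
          ∈ F.burnsideUnits :=
    fun p => hmulmem _ _ (hifmem p.1) (hprodmem p.2)
  have hbij : Function.Bijective (fun p : Bool × Finset (Fin s) =>
      (⟨_, hmem2 p⟩ : ↥F.burnsideUnits)) := by
    constructor
    · intro p p' hpp
      have hval := congrArg Subtype.val hpp
      obtain ⟨q1, hq1, huq⟩ := key _ (hmem2 p)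
      have h1 := huq p rfl
      have h2 := huq p' hval
      rw [h1, h2]
    · rintro ⟨u, hu⟩
      obtain ⟨q1, hq1, -⟩ := key u hu
      exact ⟨q1, Subtype.ext hq1.symm⟩
  rw [← Nat.card_eq_of_bijective _ hbij, Nat.card_prod, Nat.card_eq_fintype_card,
    Nat.card_eq_fintype_card, Fintype.card_bool, Fintype.card_finset, Fintype.card_fin,
    pow_succ]
  ring

end BurnsideFusion
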